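/- Let μ be an AMS and ergodic probability measure on ℝ^ℕ with stationary mean μ̄ and one-dimensional marginal μ̄₁, and let p > 0 with 0 < ∫_ℝ |x|^p dμ̄₁(x) < ∞. Then for every τ ≥ 0: (i) (1/n) · #{i ∈ {1,…,n} : X_i ∈ B_τ} → μ̄₁(B_τ) μ-almost surely; and (ii) (∑_{i=1}^n 1_{B_τ}(X_i)·|X_i|^p)/(∑_{i=1}^n |X_i|^p) → v_p(B_τ) μ-almost surely. -/

import Mathlib

set_option linter.unusedSectionVars false


open MeasureTheory Filter Set
open scoped ENNReal Topology Classical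

noncomputable section

/-- Left shift on real sequences. -/
def shift : (ℕ → ℝ) → (ℕ → ℝ) := fun x n => x (n + 1)

/-- First `n` coordinates of a sequence. -/
def proj (n : ℕ) (x : ℕ → ℝ) : Fin n → ℝ := fun i => x i

/-- Best `k`-term `ℓp`-approximation error of `x ∈ ℝ^n`. -/
def sigmaP (p : ℝ) (n k : ℕ) (x : Fin n → ℝ) : ℝ :=
  sInf {e : ℝ | ∃ S : Finset (Fin n), S.card = k ∧ e = (∑ i ∈ Sᶜ, |x i| ^ p) ^ (1 / p)}

/-- Relative best `k`-term `ℓp`-approximation error. -/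
def sigmaTilde (p : ℝ) (n k : ℕ) (x : Fin n → ℝ) : ℝ :=
  sigmaP p n k x / (∑ i, |x i| ^ p) ^ (1 / p)

/-- The set `A^{n,k}_d` of vectors with relative approximation error at most `d`. -/
def Ad (p : ℝ) (n k : ℕ) (d : ℝ) : Set (Fin n → ℝ) := {x | sigmaTilde p n k x ≤ d}

/-- `μ_n`: law of the first `n` coordinates. -/
def lawn (μ : Measure (ℕ → ℝ)) (n : ℕ) : Measure (Fin n → ℝ) := μ.map (proj n)

/-- Strong `ℓp`-characterization with constant limiting function `f : (0,1] → [0,1]`. -/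
def StrongLpChar (p : ℝ) (μ : Measure (ℕ → ℝ)) (f : ℝ → ℝ) : Prop :=
  (∀ r ∈ Set.Ioc (0:ℝ) 1, f r ∈ Set.Icc (0:ℝ) 1) ∧
  ∀ r ∈ Set.Ioc (0:ℝ) 1, ∀ k : ℕ → ℕ,
    Tendsto (fun n : ℕ => (k n : ℝ) / n) atTop (𝓝 r) →
    ∀ᵐ x ∂μ, Tendsto (fun n : ℕ => sigmaTilde p n (k n) (proj n x)) atTop (𝓝 (f r))

/-- `κ̃_p(d, ε, μ_n)`. -/
def kappaP (p : ℝ) (μ : Measure (ℕ → ℝ)) (d ε : ℝ) (n : ℕ) : ℕ :=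
  sInf {k : ℕ | 1 ≤ k ∧ k ≤ n ∧ 1 - ε ≤ (lawn μ n (Ad p n k d)).toReal}

/-- `r̃⁺_p(d, ε, μ)`. -/
def rTildePlus (p : ℝ) (μ : Measure (ℕ → ℝ)) (d ε : ℝ) : ℝ :=
  Filter.limsup (fun n : ℕ => (kappaP p μ d ε n : ℝ) / n) atTop

/-- `r̃⁻_p(d, ε, μ)`. -/
def rTildeMinus (p : ℝ) (μ : Measure (ℕ → ℝ)) (d ε : ℝ) : ℝ :=
  Filter.liminf (fun n : ℕ => (kappaP p μ d ε n : ℝ) / n) atTop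

/-- `(r, d)` is `ℓp`-achievable with probability `ε`. -/
def Achievable (p : ℝ) (μ : Measure (ℕ → ℝ)) (d ε r : ℝ) : Prop :=
  ∃ k : ℕ → ℕ, Filter.limsup (fun n : ℕ => (k n : ℝ) / n) atTop ≤ r ∧
    1 - ε ≤ Filter.liminf (fun n : ℕ => (lawn μ n (Ad p n (k n) d)).toReal) atTop

/-- `r_p(d, ε, μ)`: the rate-approximation error function. -/
def rOp (p : ℝ) (μ : Measure (ℕ → ℝ)) (d ε : ℝ) : ℝ :=
  sInf {r : ℝ | r ∈ Set.Icc (0:ℝ) 1 ∧ Achievable p μ d ε r}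

/-- `μ` is AMS with stationary mean `ν`. -/
def HasStationaryMean (μ ν : Measure (ℕ → ℝ)) : Prop :=
  ∀ F : Set (ℕ → ℝ), MeasurableSet F →
    Tendsto (fun n : ℕ => (∑ i ∈ Finset.range n, (μ (shift^[i] ⁻¹' F)).toReal) / n)
      atTop (𝓝 (ν F).toReal)

/-- `μ` is asymptotically mean stationary. -/
def IsAMS (μ : Measure (ℕ → ℝ)) : Prop :=
  ∀ F : Set (ℕ → ℝ), MeasurableSet F →
    ∃ L : ℝ, Tendsto (fun n : ℕ => (∑ i ∈ Finset.range n, (μ (shift^[i] ⁻¹' F)).toReal) / n)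
      atTop (𝓝 L)

/-- `ν` is stationary with respect to the shift. -/
def IsStationaryShift (ν : Measure (ℕ → ℝ)) : Prop :=
  ∀ F : Set (ℕ → ℝ), MeasurableSet F → ν (shift ⁻¹' F) = ν F

/-- `μ` is ergodic with respect to the shift. -/
def IsErgodicShift (μ : Measure (ℕ → ℝ)) : Prop :=
  ∀ F : Set (ℕ → ℝ), MeasurableSet F → shift ⁻¹' F = F → μ F = 0 ∨ μ F = 1

/-- 1D marginal: the law of the first coordinate. -/
def marginal1 (ν : Measure (ℕ → ℝ)) : Measure ℝ := ν.map (fun x => x 0)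

/-- The `p`-th absolute moment `∫ |x|^p dν` (as an extended real). -/
def momentP (p : ℝ) (ν : Measure ℝ) : ℝ≥0∞ := ∫⁻ x, ENNReal.ofReal (|x| ^ p) ∂ν

/-- Tail set `B_τ = (−∞,−τ] ∪ [τ,∞)`. -/
def Btau (τ : ℝ) : Set ℝ := Set.Iic (-τ) ∪ Set.Ici τ

/-- Tail set `C_τ = (−∞,−τ) ∪ (τ,∞)`. -/
def Ctau (τ : ℝ) : Set ℝ := Set.Iio (-τ) ∪ Set.Ioi τ

/-- Tail distribution function `φ_ν(τ) = ν(B_τ)`. -/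
def phiTail (ν : Measure ℝ) (τ : ℝ) : ℝ := (ν (Btau τ)).toReal

/-- `v_p(B) = (∫_B |x|^p dν) / (∫_ℝ |x|^p dν)`. -/
def vP (p : ℝ) (ν : Measure ℝ) (B : Set ℝ) : ℝ :=
  ((∫⁻ x in B, ENNReal.ofReal (|x| ^ p) ∂ν) / momentP p ν).toReal

/-- The rate vs approximation error graph `F_ν`. -/
def Fgraph (p : ℝ) (ν : Measure ℝ) : Set (ℝ × ℝ) :=
  {q | ∃ τ : ℝ, 0 ≤ τ ∧ q = (phiTail ν τ, (1 - vP p ν (Btau τ)) ^ (1 / p))} ∪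
  {q | ∃ τ : ℝ, 0 ≤ τ ∧ 0 < (ν ({-τ, τ} : Set ℝ)).toReal ∧
       ∃ α ∈ Set.Ico (0:ℝ) 1,
         q = ((ν (Ctau τ)).toReal + α * (ν ({-τ, τ} : Set ℝ)).toReal,
              (1 - vP p ν (Ctau τ) - α * vP p ν ({-τ, τ} : Set ℝ)) ^ (1 / p))}

/-- Approximation error function `f_{p,ν} : (0,1] → [0,1)`, defined through its graph `F_ν`,
with the convention `f_{p,ν} ≡ 0` when the `p`-th moment of `ν` is infinite. -/
def fApprox (p : ℝ) (ν : Measure ℝ) (r : ℝ) : ℝ :=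
  if momentP p ν = ∞ then 0 else sSup {d : ℝ | (r, d) ∈ Fgraph p ν}

section BirkhoffDev

variable {α : Type*} [MeasurableSpace α]

/-- Birkhoff sums. -/
def birkS (T : α → α) (f : α → ℝ) (n : ℕ) (x : α) : ℝ :=
  ∑ i ∈ Finset.range n, f (T^[i] x)

/-- Running maximum `max_{0 ≤ k ≤ N} S_k`. -/
def birkM (T : α → α) (f : α → ℝ) : ℕ → α → ℝ
  | 0 => fun _ => 0
  | (N+1) => fun x => max (birkS T f (N+1) x) (birkM T f N x)

variable {T : α → α} {f : α → ℝ}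

lemma birkS_zero (x : α) : birkS T f 0 x = 0 := by simp [birkS]

lemma birkS_succ' (n : ℕ) (x : α) :
    birkS T f (n + 1) x = f x + birkS T f n (T x) := by
  unfold birkS
  rw [Finset.sum_range_succ']
  simp [Function.iterate_succ_apply, add_comm]

lemma birkM_nonneg (N : ℕ) (x : α) : 0 ≤ birkM T f N x := by
  induction N with
  | zero => simp [birkM]
  | succ N ih => exact le_trans ih (le_max_right _ _) 

lemma birkM_mono (N : ℕ) (x : α) : birkM T f N x ≤ birkM T f (N+1) x :=
  le_max_right _ _

lemma birkM_mono' {a b : ℕ} (h : a ≤ b) (x : α) : birkM T f a x ≤ birkM T f b x := by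
  induction b, h using Nat.le_induction with
  | base => exact le_rfl
  | succ b hab ih => exact ih.trans (birkM_mono b x)

lemma birkS_le_birkM {k N : ℕ} (h : k ≤ N) (x : α) :
    birkS T f k x ≤ birkM T f N x := by
  induction N with
  | zero => 
    obtain rfl : k = 0 := Nat.le_zero.mp h
    simp [birkS, birkM]
  | succ N ih =>
    rcases Nat.lt_or_ge k (N+1) with h' | h'
    · exact le_trans (ih (Nat.lt_succ_iff.mp h')) (le_max_right _ _)
    · obtain rfl : k = N + 1 := le_antisymm h h'
      exact le_max_left _ _

lemma birkM_eq_birkS (N : ℕ) (x : α) : ∃ k ≤ N, birkM T f N x = birkS T f k x := by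
  induction N with
  | zero => exact ⟨0, le_rfl, by simp [birkM, birkS]⟩
  | succ N ih =>
    obtain ⟨k, hk, hEq⟩ := ih
    rcases max_cases (birkS T f (N+1) x) (birkM T f N x) with ⟨h1, _⟩ | ⟨h1, _⟩
    · exact ⟨N+1, le_rfl, h1⟩
    · exact ⟨k, hk.trans (Nat.le_succ N), by rw [← hEq]; exact h1⟩

lemma birkM_key {N : ℕ} {x : α} (h : 0 < birkM T f N x) :
    birkM T f N x ≤ f x + birkM T f N (T x) := by
  obtain ⟨k, hk, hEq⟩ := birkM_eq_birkS (T := T) (f := f) N x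
  rcases Nat.eq_zero_or_pos k with rfl | hkpos
  · rw [hEq, birkS_zero] at h; exact absurd h (lt_irrefl 0)
  · obtain ⟨m, rfl⟩ := Nat.exists_eq_add_of_lt hkpos
    rw [hEq]
    simp only [zero_add] at *
    rw [birkS_succ']
    exact add_le_add le_rfl (birkS_le_birkM (by omega) (T x))

lemma birkS_measurable (hT : Measurable T) (hf : Measurable f) (n : ℕ) :
    Measurable (birkS T f n) := by
  unfold birkS
  exact Finset.measurable_sum _ fun i _ => hf.comp (hT.iterate i)

lemma birkM_measurable (hT : Measurable T) (hf : Measurable f) (N : ℕ) :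
    Measurable (birkM T f N) := by
  induction N with
  | zero => exact measurable_const
  | succ N ih => exact (birkS_measurable hT hf (N+1)).max ih

lemma birkS_integrable {ν : Measure α} (hT : MeasurePreserving T ν ν)
    (hf : Integrable f ν) (n : ℕ) : Integrable (birkS T f n) ν := by
  unfold birkS
  exact integrable_finset_sum _ fun i _ =>
    (hT.iterate i).integrable_comp hf.aestronglyMeasurable |>.mpr hf

lemma birkM_integrable {ν : Measure α} (hT : MeasurePreserving T ν ν)
    (hf : Integrable f ν) (N : ℕ) : Integrable (birkM T f N) ν := by
  induction N with
  | zero => exact integrable_zero _ _ _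
  | succ N ih => exact (birkS_integrable hT hf (N+1)).sup ih

end BirkhoffDev

section MET

variable {α : Type*} [MeasurableSpace α] {ν : Measure α} [IsProbabilityMeasure ν]
  {T : α → α} {f : α → ℝ}

/-- Maximal ergodic theorem (Garsia's proof). -/
theorem met (hTm : Measurable T) (hT : MeasurePreserving T ν ν)
    (hfm : Measurable f) (hfi : Integrable f ν) (N : ℕ) :
    0 ≤ ∫ x in {x | 0 < birkM T f N x}, f x ∂ν := by
  set E := {x | 0 < birkM T f N x} with hE
  have hEm : MeasurableSet E := measurableSet_lt measurable_const (birkM_measurable hTm hfm N)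
  have hMi : Integrable (birkM T f N) ν := birkM_integrable hT hfi N
  have hMTi : Integrable (fun x => birkM T f N (T x)) ν :=
    (hT.integrable_comp hMi.aestronglyMeasurable).mpr hMi
  -- pointwise: on E, M N x - M N (T x) ≤ f x
  have hpt : ∀ x ∈ E, birkM T f N x - birkM T f N (T x) ≤ f x := fun x hx => by
    have := birkM_key (T := T) (f := f) hx
    linarith
  have h1 : ∫ x in E, (birkM T f N x - birkM T f N (T x)) ∂ν ≤ ∫ x in E, f x ∂ν := by
    refine setIntegral_mono_on (hMi.sub hMTi).integrableOn hfi.integrableOn hEm hpt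
  have h2 : ∫ x in E, (birkM T f N x - birkM T f N (T x)) ∂ν
      = ∫ x in E, birkM T f N x ∂ν - ∫ x in E, birkM T f N (T x) ∂ν :=
    integral_sub hMi.integrableOn hMTi.integrableOn
  have h3 : ∫ x in E, birkM T f N x ∂ν = ∫ x, birkM T f N x ∂ν := by
    rw [← integral_indicator hEm]
    congr 1
    funext x
    by_cases hx : x ∈ E
    · simp [hx]
    · have h0 : birkM T f N x = 0 :=
        le_antisymm (not_lt.mp hx) (birkM_nonneg N x)
      simp [hx, h0]
  have h4 : ∫ x in E, birkM T f N (T x) ∂ν ≤ ∫ x, birkM T f N (T x) ∂ν :=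
    setIntegral_le_integral hMTi (Filter.Eventually.of_forall fun x => birkM_nonneg N (T x))
  have hsm : AEStronglyMeasurable (birkM T f N) (ν.map T) := by
    rw [hT.map_eq]; exact hMi.aestronglyMeasurable
  have h5 : ∫ x, birkM T f N (T x) ∂ν = ∫ x, birkM T f N x ∂ν := by
    rw [← integral_map hTm.aemeasurable hsm, hT.map_eq]
  linarith

/-- Core contradiction lemma. -/
theorem met_core (hTm : Measurable T) (hT : MeasurePreserving T ν ν)
    (hfm : Measurable f) (hfi : Integrable f ν) (hneg : ∫ x, f x ∂ν < 0)
    (hae : ∀ᵐ x ∂ν, ∃ n, 0 < birkS T f n x) : False := by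
  set U : ℕ → Set α := fun N => {x | 0 < birkM T f N x} with hU
  have hUm : ∀ N, MeasurableSet (U N) := fun N =>
    measurableSet_lt measurable_const (birkM_measurable hTm hfm N)
  have hUmono : Monotone U := fun a b hab x hx =>
    lt_of_lt_of_le hx (birkM_mono' hab x)
  have haeU : ∀ᵐ x ∂ν, x ∈ ⋃ N, U N := by
    filter_upwards [hae] with x hx
    obtain ⟨n, hn⟩ := hx
    exact mem_iUnion.mpr ⟨n, lt_of_lt_of_le hn (birkS_le_birkM le_rfl x)⟩
  have hrestrict : ν.restrict (⋃ N, U N) = ν := by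
    have h0 : ν ((⋃ N, U N)ᶜ) = 0 := by
      have h := ae_iff.1 haeU
      exact h
    rw [Measure.restrict_congr_set (ae_eq_univ.mpr h0), Measure.restrict_univ]
  have htend : Tendsto (fun N => ∫ x in U N, f x ∂ν) atTop (𝓝 (∫ x in ⋃ N, U N, f x ∂ν)) :=
    tendsto_setIntegral_of_monotone hUm hUmono (by rw [IntegrableOn, hrestrict]; exact hfi)
  have hlim : ∫ x in ⋃ N, U N, f x ∂ν = ∫ x, f x ∂ν := by rw [hrestrict]
  have : 0 ≤ ∫ x, f x ∂ν := by
    rw [← hlim]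
    exact le_of_tendsto_of_tendsto' tendsto_const_nhds htend fun N => met hTm hT hfm hfi N
  linarith

end MET

section Step1

variable {α : Type*} [MeasurableSpace α] {T : α → α} {f : α → ℝ}

lemma birkS_nonneg (hf0 : ∀ y, 0 ≤ f y) (n : ℕ) (x : α) : 0 ≤ birkS T f n x :=
  Finset.sum_nonneg fun i _ => hf0 _

lemma ennreal_limsup_add_const (w : ℕ → ℝ≥0∞) (c : ℝ≥0∞) :
    limsup (fun n => w n + c) atTop ≤ limsup w atTop + c := by
  rw [limsup_eq_iInf_iSup_of_nat, limsup_eq_iInf_iSup_of_nat, ENNReal.iInf_add]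
  refine le_iInf fun n => (iInf_le _ n).trans ?_
  exact iSup₂_le fun i hi => add_le_add (le_iSup₂ (f := fun i (_ : i ≥ n) => w i) i hi) le_rfl

lemma limsup_ofReal_mono {u v : ℕ → ℝ}
    (h : ∀ ε : ℝ, 0 < ε → ∀ᶠ n in atTop, u n ≤ v n + ε) :
    limsup (fun n => ENNReal.ofReal (u n)) atTop
      ≤ limsup (fun n => ENNReal.ofReal (v n)) atTop := by
  refine ENNReal.le_of_forall_pos_le_add fun ε hε _ => ?_
  have hε' : (0:ℝ) < ε := by exact_mod_cast hε
  have h1 : ∀ᶠ n in atTop,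
      ENNReal.ofReal (u n) ≤ ENNReal.ofReal (v n) + ENNReal.ofReal ε := by
    filter_upwards [h ε hε'] with n hn
    exact (ENNReal.ofReal_le_ofReal hn).trans ENNReal.ofReal_add_le
  calc limsup (fun n => ENNReal.ofReal (u n)) atTop
      ≤ limsup (fun n => ENNReal.ofReal (v n) + ENNReal.ofReal ε) atTop :=
        limsup_le_limsup h1
    _ ≤ limsup (fun n => ENNReal.ofReal (v n)) atTop + ENNReal.ofReal ε :=
        ennreal_limsup_add_const _ _
    _ = limsup (fun n => ENNReal.ofReal (v n)) atTop + ↑ε := by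
        rw [ENNReal.ofReal_coe_nnreal]

/-- The asymptotic average (as `ℝ≥0∞`-limsup) is exactly shift invariant. -/
lemma limsupENN_comp (hf0 : ∀ y, 0 ≤ f y) (x : α) :
    limsup (fun n => ENNReal.ofReal (birkS T f n (T x) / n)) atTop
      = limsup (fun n => ENNReal.ofReal (birkS T f n x / n)) atTop := by
  set a : ℕ → ℝ := fun n => birkS T f n (T x) / n with ha
  set b : ℕ → ℝ := fun n => birkS T f n x / n with hb
  have hb0 : ∀ n, 0 ≤ b n := fun n => div_nonneg (birkS_nonneg hf0 n x) (Nat.cast_nonneg n)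
  have hshift : limsup (fun n => ENNReal.ofReal (b (n+1))) atTop
      = limsup (fun n => ENNReal.ofReal (b n)) atTop :=
    limsup_nat_add (fun n => ENNReal.ofReal (b n)) 1
  -- basic identities for n ≥ 1
  have hbS : ∀ n : ℕ, b (n+1) = birkS T f (n+1) x / ((n:ℝ)+1) := by
    intro n; simp only [hb]; push_cast; ring_nf
  have haS : ∀ n : ℕ, a n = (birkS T f (n+1) x - f x) / n := by
    intro n; simp only [ha, birkS_succ']; ring_nf
  -- key1 : b (n+1) ≤ a n + f x / n  for n ≥ 1
  have key1 : ∀ ε : ℝ, 0 < ε → ∀ᶠ n in atTop, b (n+1) ≤ a n + ε := by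
    intro ε hε
    have hto : Tendsto (fun n : ℕ => f x / (n:ℝ)) atTop (𝓝 0) :=
      tendsto_const_div_atTop_nhds_zero_nat (f x)
    filter_upwards [hto.eventually (eventually_lt_nhds hε), eventually_ge_atTop 1]
      with n hn hn1
    have hnpos : (0:ℝ) < n := by exact_mod_cast hn1
    have h1 : b (n+1) ≤ birkS T f (n+1) x / n := by
      rw [hbS n]
      gcongr
      · exact birkS_nonneg hf0 _ x
      · linarith
    have h2 : birkS T f (n+1) x / (n:ℝ) = a n + f x / n := by
      rw [haS n]; field_simp; ring
    linarith [h1, h2.le, hn.le]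
  -- limsup b∘succ ≤ limsup a
  have hle1 : limsup (fun n => ENNReal.ofReal (b (n+1))) atTop
      ≤ limsup (fun n => ENNReal.ofReal (a n)) atTop := limsup_ofReal_mono key1
  -- limsup a ≤ limsup b∘succ
  have hle2 : limsup (fun n => ENNReal.ofReal (a n)) atTop
      ≤ limsup (fun n => ENNReal.ofReal (b (n+1))) atTop := by
    set L := limsup (fun n => ENNReal.ofReal (b (n+1))) atTop with hL
    rcases eq_or_ne L ⊤ with htop | hfin
    · rw [htop]; exact le_top
    have hlt : L < L + 1 := ENNReal.lt_add_right hfin one_ne_zero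
    have hev : ∀ᶠ n in atTop, ENNReal.ofReal (b (n+1)) < L + 1 :=
      eventually_lt_of_limsup_lt hlt
    set B := (L + 1).toReal with hBdef
    have hB0 : 0 ≤ B := ENNReal.toReal_nonneg
    have hevB : ∀ᶠ n in atTop, b (n+1) ≤ B := by
      filter_upwards [hev] with n hn
      have h := ENNReal.toReal_mono (by simp [ENNReal.add_ne_top, hfin]) hn.le
      rwa [ENNReal.toReal_ofReal (hb0 (n+1))] at h
    refine limsup_ofReal_mono ?_
    intro ε hε
    have hto : Tendsto (fun n : ℕ => B / (n:ℝ)) atTop (𝓝 0) :=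
      tendsto_const_div_atTop_nhds_zero_nat B
    filter_upwards [hevB, hto.eventually (eventually_lt_nhds hε), eventually_ge_atTop 1]
      with n hBn hn hn1
    have hnpos : (0:ℝ) < n := by exact_mod_cast hn1
    have h1 : a n ≤ birkS T f (n+1) x / n := by
      rw [haS n]
      gcongr
      linarith [hf0 x]
    have h2 : birkS T f (n+1) x / (n:ℝ) = b (n+1) + b (n+1) / n := by
      rw [hbS n]; field_simp
    have h3 : b (n+1) / n ≤ B / n := by gcongr
    linarith [h1, h2.le, h3, hn.le]
  rw [← hshift]
  exact le_antisymm hle2 hle1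

end Step1

section Step1b

variable {α : Type*} [MeasurableSpace α] {ν : Measure α} [IsProbabilityMeasure ν]
  {T : α → α} {f : α → ℝ}

theorem birkhoff_limsup_le (hTm : Measurable T) (hT : MeasurePreserving T ν ν)
    (hergν : ∀ F : Set α, MeasurableSet F → T ⁻¹' F = F → ν F = 0 ∨ ν F = 1)
    (hfm : Measurable f) (hfi : Integrable f ν) (hf0 : ∀ y, 0 ≤ f y) :
    ∀ᵐ x ∂ν, limsup (fun n => ENNReal.ofReal (birkS T f n x / n)) atTop
      ≤ ENNReal.ofReal (∫ y, f y ∂ν) := by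
  set I := ∫ y, f y ∂ν with hI
  have hI0 : 0 ≤ I := integral_nonneg hf0
  set G : α → ℝ≥0∞ := fun x => limsup (fun n => ENNReal.ofReal (birkS T f n x / n)) atTop
    with hG
  have hGm : Measurable G :=
    Measurable.limsup fun n =>
      ENNReal.measurable_ofReal.comp ((birkS_measurable hTm hfm n).div_const _)
  have key : ∀ q : ℚ, I < q → ∀ᵐ x ∂ν, G x ≤ ENNReal.ofReal q := by
    intro q hq
    set lam : ℝ := (I + q) / 2 with hlam
    have h1 : I < lam := by rw [hlam]; linarith
    have h2 : lam < q := by rw [hlam]; linarith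
    have hlam0 : 0 < lam := lt_of_le_of_lt hI0 h1
    set E := {x | ENNReal.ofReal lam < G x} with hE
    have hEm : MeasurableSet E := measurableSet_lt measurable_const hGm
    have hEinv : T ⁻¹' E = E := by
      ext x
      simp only [hE, mem_preimage, mem_setOf_eq, hG]
      rw [limsupENN_comp hf0 x]
    rcases hergν E hEm hEinv with h0 | h1'
    · have hae : ∀ᵐ x ∂ν, x ∉ E := measure_eq_zero_iff_ae_notMem.mp h0
      filter_upwards [hae] with x hx
      have : ¬ ENNReal.ofReal lam < G x := hx
      exact (not_lt.mp this).trans (ENNReal.ofReal_le_ofReal h2.le)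
    · exfalso
      set g : α → ℝ := fun y => f y - lam with hg
      have hgm : Measurable g := hfm.sub measurable_const
      have hgi : Integrable g ν := hfi.sub (integrable_const lam)
      have hgneg : ∫ y, g y ∂ν < 0 := by
        rw [hg]
        rw [integral_sub hfi (integrable_const lam), integral_const]
        simp only [probReal_univ, one_smul]
        linarith
      apply met_core hTm hT hgm hgi hgneg
      have haeE : ∀ᵐ x ∂ν, x ∈ E := by
        have hcompl : ν Eᶜ = 0 := by
          rw [measure_compl hEm (measure_ne_top ν E), h1', measure_univ, tsub_self]
        rw [ae_iff]
        exact hcompl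
      filter_upwards [haeE] with x hx
      have hfreq : ∃ᶠ n in atTop, ENNReal.ofReal lam
          < ENNReal.ofReal (birkS T f n x / n) := frequently_lt_of_lt_limsup (by isBoundedDefault) hx
      obtain ⟨n, hn⟩ := hfreq.exists
      have hn' : lam < birkS T f n x / n := by
        by_contra hcon
        exact absurd (ENNReal.ofReal_le_ofReal (not_lt.mp hcon)) (not_le.mpr hn)
      have hn0 : n ≠ 0 := by
        rintro rfl
        rw [birkS_zero] at hn'
        norm_num at hn'
        linarith
      have hnpos : (0:ℝ) < n := by
        exact_mod_cast Nat.pos_of_ne_zero hn0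
      refine ⟨n, ?_⟩
      have hSg : birkS T g n x = birkS T f n x - n * lam := by
        unfold birkS
        rw [hg]
        rw [Finset.sum_sub_distrib]
        simp [Finset.sum_const, Finset.card_range, mul_comm]
      rw [hSg]
      have := (lt_div_iff₀ hnpos).mp hn'
      linarith
  have hall : ∀ᵐ x ∂ν, ∀ q : ℚ, I < q → G x ≤ ENNReal.ofReal q := by
    rw [ae_all_iff]
    intro q
    by_cases hq : I < q
    · filter_upwards [key q hq] with x hx _
      exact hx
    · filter_upwards with x hx
      exact absurd hx hq
  filter_upwards [hall] with x hx
  refine ENNReal.le_of_forall_pos_le_add fun ε hε _ => ?_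
  have hε' : (0:ℝ) < ε := by exact_mod_cast hε
  obtain ⟨q, hq1, hq2⟩ := exists_rat_btwn (lt_add_of_pos_right I hε')
  calc G x ≤ ENNReal.ofReal q := hx q hq1
    _ ≤ ENNReal.ofReal (I + ε) := ENNReal.ofReal_le_ofReal hq2.le
    _ ≤ ENNReal.ofReal I + ENNReal.ofReal ε := ENNReal.ofReal_add_le
    _ = ENNReal.ofReal I + ↑ε := by rw [ENNReal.ofReal_coe_nnreal]

end Step1b

section Step23

variable {α : Type*} [MeasurableSpace α] {ν : Measure α} [IsProbabilityMeasure ν]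
  {T : α → α} {f : α → ℝ}

lemma upper_of_limsup {u : ℕ → ℝ} {L : ℝ} (hL : 0 ≤ L) (hu0 : ∀ n, 0 ≤ u n)
    (h : limsup (fun n => ENNReal.ofReal (u n)) atTop ≤ ENNReal.ofReal L)
    {ε : ℝ} (hε : 0 < ε) : ∀ᶠ n in atTop, u n < L + ε := by
  have hlt : limsup (fun n => ENNReal.ofReal (u n)) atTop < ENNReal.ofReal (L + ε) :=
    lt_of_le_of_lt h (by
      rw [ENNReal.ofReal_lt_ofReal_iff (by positivity)]
      linarith)
  filter_upwards [eventually_lt_of_limsup_lt hlt] with n hn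
  have := (ENNReal.ofReal_lt_ofReal_iff_of_nonneg (hu0 n)).mp hn
  linarith

/-- Pointwise ergodic theorem, bounded nonnegative case. -/
theorem birkhoff_bounded (hTm : Measurable T) (hT : MeasurePreserving T ν ν)
    (hergν : ∀ F : Set α, MeasurableSet F → T ⁻¹' F = F → ν F = 0 ∨ ν F = 1)
    (hfm : Measurable f) (hfi : Integrable f ν) (hf0 : ∀ y, 0 ≤ f y)
    {c : ℝ} (hfc : ∀ y, f y ≤ c) :
    ∀ᵐ x ∂ν, Tendsto (fun n => birkS T f n x / n) atTop (𝓝 (∫ y, f y ∂ν)) := by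
  set I := ∫ y, f y ∂ν with hI
  have hI0 : 0 ≤ I := integral_nonneg hf0
  set c' := max c 0 with hc'
  have hfc' : ∀ y, f y ≤ c' := fun y => (hfc y).trans (le_max_left _ _)
  set ψ : α → ℝ := fun y => c' - f y with hψ
  have hψm : Measurable ψ := measurable_const.sub hfm
  have hψi : Integrable ψ ν := (integrable_const c').sub hfi
  have hψ0 : ∀ y, 0 ≤ ψ y := fun y => sub_nonneg.mpr (hfc' y)
  have hIψ : ∫ y, ψ y ∂ν = c' - I := by
    rw [hψ]
    rw [integral_sub (integrable_const c') hfi, integral_const]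
    simp [measure_univ, hI]
  have hIc : I ≤ c' := by
    have := integral_mono hfi (integrable_const c') hfc'
    simpa [integral_const, measure_univ] using this
  have h1 := birkhoff_limsup_le hTm hT hergν hfm hfi hf0
  have h2 := birkhoff_limsup_le hTm hT hergν hψm hψi hψ0
  filter_upwards [h1, h2] with x hx1 hx2
  rw [hIψ] at hx2
  refine Metric.tendsto_atTop.mpr fun ε hε => ?_
  have hu0 : ∀ n, 0 ≤ birkS T f n x / n :=
    fun n => div_nonneg (birkS_nonneg hf0 n x) (Nat.cast_nonneg n)
  have hψ0' : ∀ n, 0 ≤ birkS T ψ n x / n :=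
    fun n => div_nonneg (birkS_nonneg hψ0 n x) (Nat.cast_nonneg n)
  have hu := upper_of_limsup hI0 hu0 hx1 (half_pos hε)
  have hv := upper_of_limsup (sub_nonneg.mpr hIc) hψ0' hx2 (half_pos hε)
  have hrel : ∀ n : ℕ, 1 ≤ n → birkS T ψ n x / n = c' - birkS T f n x / n := by
    intro n hn
    have hnpos : (0:ℝ) < n := by exact_mod_cast hn
    have hSψ : birkS T ψ n x = n * c' - birkS T f n x := by
      unfold birkS
      rw [hψ, Finset.sum_sub_distrib]
      simp [Finset.sum_const, Finset.card_range, mul_comm]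
    rw [hSψ]
    field_simp
  have hev : ∀ᶠ n in atTop, dist (birkS T f n x / n) I < ε := by
    filter_upwards [hu, hv, eventually_ge_atTop 1] with n hn1 hn2 hn3
    rw [hrel n hn3] at hn2
    rw [Real.dist_eq, abs_lt]
    constructor <;> linarith
  exact eventually_atTop.mp hev

/-- Pointwise ergodic theorem, nonnegative integrable case. -/
theorem birkhoff_ae (hTm : Measurable T) (hT : MeasurePreserving T ν ν)
    (hergν : ∀ F : Set α, MeasurableSet F → T ⁻¹' F = F → ν F = 0 ∨ ν F = 1)
    (hfm : Measurable f) (hfi : Integrable f ν) (hf0 : ∀ y, 0 ≤ f y) :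
    ∀ᵐ x ∂ν, Tendsto (fun n => birkS T f n x / n) atTop (𝓝 (∫ y, f y ∂ν)) := by
  set I := ∫ y, f y ∂ν with hI
  set φ : ℕ → α → ℝ := fun M y => min (f y) M with hφ
  have hφm : ∀ M, Measurable (φ M) := fun M => hfm.min measurable_const
  have hφ0 : ∀ M y, 0 ≤ φ M y := fun M y => le_min (hf0 y) (Nat.cast_nonneg M)
  have hφle : ∀ M y, φ M y ≤ f y := fun M y => min_le_left _ _
  have hφi : ∀ M, Integrable (φ M) ν := fun M => by
    refine hfi.mono (hφm M).aestronglyMeasurable ?_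
    filter_upwards with y
    rw [Real.norm_eq_abs, Real.norm_eq_abs, abs_of_nonneg (hφ0 M y), abs_of_nonneg (hf0 y)]
    exact hφle M y
  have hIM : Tendsto (fun M : ℕ => ∫ y, φ M y ∂ν) atTop (𝓝 I) := by
    refine tendsto_integral_of_dominated_convergence f
      (fun M => (hφm M).aestronglyMeasurable) hfi ?_ ?_
    · intro M
      filter_upwards with y
      rw [Real.norm_eq_abs, abs_of_nonneg (hφ0 M y)]
      exact hφle M y
    · filter_upwards with y
      refine tendsto_const_nhds.congr' ?_
      filter_upwards [eventually_ge_atTop ⌈f y⌉₊] with M hM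
      rw [hφ]
      simp only
      rw [min_eq_left]
      exact (Nat.le_ceil (f y)).trans (by exact_mod_cast hM)
  have hM : ∀ M : ℕ, ∀ᵐ x ∂ν,
      Tendsto (fun n => birkS T (φ M) n x / n) atTop (𝓝 (∫ y, φ M y ∂ν)) := fun M =>
    birkhoff_bounded hTm hT hergν (hφm M) (hφi M) (hφ0 M) (fun y => min_le_right _ _)
  have hup := birkhoff_limsup_le hTm hT hergν hfm hfi hf0
  filter_upwards [hup, ae_all_iff.mpr hM] with x hx1 hx2
  have hu0 : ∀ n, 0 ≤ birkS T f n x / n :=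
    fun n => div_nonneg (birkS_nonneg hf0 n x) (Nat.cast_nonneg n)
  have hI0 : 0 ≤ I := integral_nonneg hf0
  refine tendsto_order.mpr ⟨?_, ?_⟩
  · intro l hl
    obtain ⟨M, hMl⟩ := ((tendsto_order.mp hIM).1 l hl).exists
    filter_upwards [(tendsto_order.mp (hx2 M)).1 l hMl] with n hn
    refine lt_of_lt_of_le hn (by gcongr <;> exact Finset.sum_le_sum fun i _ => hφle M _)
  · intro u hu
    have hε : 0 < u - I := sub_pos.mpr hu
    filter_upwards [upper_of_limsup hI0 hu0 hx1 hε] with n hn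
    linarith

end Step23

section Transfer

variable {α : Type*} [MeasurableSpace α] {T : α → α} {f : α → ℝ}

lemma tendsto_succ_div_nat : Tendsto (fun n : ℕ => ((n:ℝ)+1) / n) atTop (𝓝 1) := by
  have h0 : Tendsto (fun n : ℕ => 1 + 1/(n:ℝ)) atTop (𝓝 1) := by
    have := tendsto_const_div_atTop_nhds_zero_nat (1:ℝ)
    simpa using tendsto_const_nhds.add this
  refine h0.congr' ?_
  filter_upwards [eventually_ge_atTop 1] with n hn
  have hnpos : (0:ℝ) < n := by exact_mod_cast hn
  field_simp

lemma tendstoSet_inv (L : ℝ) :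
    T ⁻¹' {x | Tendsto (fun n => birkS T f n x / n) atTop (𝓝 L)}
      = {x | Tendsto (fun n => birkS T f n x / n) atTop (𝓝 L)} := by
  ext x
  simp only [mem_preimage, mem_setOf_eq]
  have hid : ∀ n : ℕ, birkS T f (n+1) x / (n:ℝ) = birkS T f n (T x) / n + f x / n := by
    intro n
    rw [birkS_succ', add_div, add_comm]
  constructor
  · intro h
    have h1 : Tendsto (fun n : ℕ => birkS T f (n+1) x / n) atTop (𝓝 L) := by
      have := h.add (tendsto_const_div_atTop_nhds_zero_nat (f x))
      rw [add_zero] at this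
      exact this.congr fun n => (hid n).symm
    have h2 : Tendsto (fun n : ℕ => birkS T f (n+1) x / ((n:ℝ)+1)) atTop (𝓝 L) := by
      have hmul := h1.mul (tendsto_natCast_div_add_atTop (1:ℝ))
      rw [mul_one] at hmul
      refine hmul.congr' ?_
      filter_upwards [eventually_ge_atTop 1] with n hn
      have hnpos : (0:ℝ) < n := by exact_mod_cast hn
      field_simp
    have h3 : Tendsto (fun n : ℕ => birkS T f (n+1) x / ((n:ℕ)+1 : ℕ)) atTop (𝓝 L) := by
      refine h2.congr fun n => ?_
      push_cast
      ring_nf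
    exact (tendsto_add_atTop_iff_nat 1).mp h3
  · intro h
    have h2 : Tendsto (fun n : ℕ => birkS T f (n+1) x / ((n:ℝ)+1)) atTop (𝓝 L) := by
      have := (tendsto_add_atTop_iff_nat 1).mpr h
      refine this.congr fun n => ?_
      push_cast
      ring_nf
    have h1 : Tendsto (fun n : ℕ => birkS T f (n+1) x / n) atTop (𝓝 L) := by
      have hmul := h2.mul tendsto_succ_div_nat
      rw [mul_one] at hmul
      refine hmul.congr' ?_
      filter_upwards [eventually_ge_atTop 1] with n hn
      have hnpos : (0:ℝ) < n := by exact_mod_cast hn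
      have hn1 : ((n:ℝ)+1) ≠ 0 := by positivity
      field_simp
    have := h1.sub (tendsto_const_div_atTop_nhds_zero_nat (f x))
    rw [sub_zero] at this
    refine this.congr fun n => ?_
    rw [hid n]
    ring

lemma tendstoSet_meas [TopologicalSpace α] (hTm : Measurable T) (hfm : Measurable f) (L : ℝ) :
    MeasurableSet {x | Tendsto (fun n => birkS T f n x / n) atTop (𝓝 L)} :=
  measurableSet_tendsto (𝓝 L) fun n => (birkS_measurable hTm hfm n).div_const _

lemma cesaro_shift {a : ℕ → ℝ} {c : ℝ}
    (h : Tendsto (fun n : ℕ => (∑ i ∈ Finset.range n, a i) / n) atTop (𝓝 c)) :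
    Tendsto (fun n : ℕ => (∑ i ∈ Finset.range n, a (i+1)) / n) atTop (𝓝 c) := by
  have h2 : Tendsto (fun n : ℕ => (∑ i ∈ Finset.range (n+1), a i) / ((n:ℝ)+1))
      atTop (𝓝 c) := by
    have := (tendsto_add_atTop_iff_nat 1).mpr h
    refine this.congr fun n => ?_
    push_cast
    ring_nf
  have h1 : Tendsto (fun n : ℕ => (∑ i ∈ Finset.range (n+1), a i) / n) atTop (𝓝 c) := by
    have hmul := h2.mul tendsto_succ_div_nat
    rw [mul_one] at hmul
    refine hmul.congr' ?_
    filter_upwards [eventually_ge_atTop 1] with n hn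
    have hnpos : (0:ℝ) < n := by exact_mod_cast hn
    have hn1 : ((n:ℝ)+1) ≠ 0 := by positivity
    field_simp
  have := h1.sub (tendsto_const_div_atTop_nhds_zero_nat (a 0))
  rw [sub_zero] at this
  refine this.congr fun n => ?_
  rw [Finset.sum_range_succ']
  ring

end Transfer

section ShiftSpace

lemma shift_measurable : Measurable shift :=
  measurable_pi_lambda _ fun n => measurable_pi_apply (n+1)

lemma shift_iter_apply : ∀ (i : ℕ) (x : ℕ → ℝ) (j : ℕ), (shift^[i] x) j = x (j + i)
  | 0, x, j => by simp
  | (i+1), x, j => by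
    rw [Function.iterate_succ_apply, shift_iter_apply i (shift x) j]
    exact congrArg x (by omega)

lemma birkS_shift (F : ℝ → ℝ) (n : ℕ) (x : ℕ → ℝ) :
    birkS shift (fun y => F (y 0)) n x = ∑ i ∈ Finset.range n, F (x i) := by
  unfold birkS
  refine Finset.sum_congr rfl fun i _ => ?_
  show F (shift^[i] x 0) = F (x i)
  rw [shift_iter_apply i x 0, Nat.zero_add]

lemma shift_iter_preimage {F : Set (ℕ → ℝ)} (hinv : shift ⁻¹' F = F) :
    ∀ i, shift^[i] ⁻¹' F = F
  | 0 => rfl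
  | (i+1) => by
    rw [Function.iterate_succ, Set.preimage_comp, shift_iter_preimage hinv i, hinv]

variable {μ ν : Measure (ℕ → ℝ)} [IsProbabilityMeasure μ] [IsProbabilityMeasure ν]

lemma invariant_measure_eq (hAMS : HasStationaryMean μ ν) {F : Set (ℕ → ℝ)}
    (hF : MeasurableSet F) (hinv : shift ⁻¹' F = F) : μ F = ν F := by
  have h := hAMS F hF
  have hconst : (fun _ : ℕ => (μ F).toReal) =ᶠ[atTop]
      (fun n : ℕ => (∑ i ∈ Finset.range n, (μ (shift^[i] ⁻¹' F)).toReal) / n) := by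
    filter_upwards [eventually_ge_atTop 1] with n hn
    have heq : ∀ i ∈ Finset.range n, (μ (shift^[i] ⁻¹' F)).toReal = (μ F).toReal :=
      fun i _ => by rw [shift_iter_preimage hinv i]
    rw [Finset.sum_congr rfl heq, Finset.sum_const, Finset.card_range, nsmul_eq_mul]
    have hnpos : (0:ℝ) < n := by exact_mod_cast hn
    field_simp
  have h2 : Tendsto (fun n : ℕ => (∑ i ∈ Finset.range n, (μ (shift^[i] ⁻¹' F)).toReal) / n)
      atTop (𝓝 (μ F).toReal) := Tendsto.congr' hconst tendsto_const_nhds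
  have h3 := tendsto_nhds_unique h h2
  exact ((ENNReal.toReal_eq_toReal_iff' (measure_ne_top μ F) (measure_ne_top ν F)).mp h3.symm)

lemma nu_measurePreserving (hAMS : HasStationaryMean μ ν) :
    MeasurePreserving shift ν ν := by
  refine ⟨shift_measurable, ?_⟩
  refine Measure.ext fun F hF => ?_
  rw [Measure.map_apply shift_measurable hF]
  have h1 := hAMS F hF
  have h2 := hAMS (shift ⁻¹' F) (shift_measurable hF)
  have h3 : (fun n : ℕ => (∑ i ∈ Finset.range n, (μ (shift^[i] ⁻¹' (shift ⁻¹' F))).toReal) / n)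
      = fun n : ℕ => (∑ i ∈ Finset.range n, (μ (shift^[i+1] ⁻¹' F)).toReal) / n := by
    funext n
    congr 1
    refine Finset.sum_congr rfl fun i _ => ?_
    rw [← Set.preimage_comp, ← Function.iterate_succ']
  rw [h3] at h2
  have h4 := cesaro_shift (a := fun i => (μ (shift^[i] ⁻¹' F)).toReal) h1
  exact (ENNReal.toReal_eq_toReal_iff' (measure_ne_top ν _) (measure_ne_top ν F)).mp
    (tendsto_nhds_unique h2 h4)

lemma nu_ergodic (hAMS : HasStationaryMean μ ν) (herg : IsErgodicShift μ) :
    ∀ F : Set (ℕ → ℝ), MeasurableSet F → shift ⁻¹' F = F → ν F = 0 ∨ ν F = 1 :=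
  fun F hF hinv => by
    rw [← invariant_measure_eq hAMS hF hinv]
    exact herg F hF hinv

end ShiftSpace

/-- Point-wise ergodic estimates used in the proof of Theorem 1: empirical tail frequencies
and empirical relative `p`-energies converge a.s. to `μ̄₁(B_τ)` and `v_p(B_τ)`. -/
theorem ams_ergodic_empirical_tail_convergence
    (p : ℝ) (hp : 0 < p) (μ ν : Measure (ℕ → ℝ))
    [IsProbabilityMeasure μ] [IsProbabilityMeasure ν]
    (hAMS : HasStationaryMean μ ν) (herg : IsErgodicShift μ)
    (hmom0 : 0 < momentP p (marginal1 ν)) (hmomfin : momentP p (marginal1 ν) < ∞) :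
    ∀ τ : ℝ, 0 ≤ τ →
      (∀ᵐ x ∂μ, Tendsto
        (fun n : ℕ => (∑ i ∈ Finset.range n, (Btau τ).indicator (fun _ => (1:ℝ)) (x i)) / n)
        atTop (𝓝 (phiTail (marginal1 ν) τ))) ∧
      (∀ᵐ x ∂μ, Tendsto
        (fun n : ℕ => (∑ i ∈ Finset.range n, (Btau τ).indicator (fun t => |t| ^ p) (x i)) /
          (∑ i ∈ Finset.range n, |x i| ^ p))
        atTop (𝓝 (vP p (marginal1 ν) (Btau τ)))) := by
  intro τ htau
  have hBm : MeasurableSet (Btau τ) := measurableSet_Iic.union measurableSet_Ici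
  have hevalm : Measurable (fun x : ℕ → ℝ => x 0) := measurable_pi_apply 0
  set F1 : ℝ → ℝ := (Btau τ).indicator (fun _ => (1:ℝ)) with hF1
  set F2 : ℝ → ℝ := (Btau τ).indicator (fun t => |t| ^ p) with hF2
  set F3 : ℝ → ℝ := fun t => |t| ^ p with hF3
  have hF3m : Measurable F3 := (continuous_abs.rpow_const fun t => Or.inr hp.le).measurable
  have hF1m : Measurable F1 := measurable_const.indicator hBm
  have hF2m : Measurable F2 := hF3m.indicator hBm
  have hF30 : ∀ t, 0 ≤ F3 t := fun t => Real.rpow_nonneg (abs_nonneg t) p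
  have hF10 : ∀ t, 0 ≤ F1 t := fun t => Set.indicator_nonneg (fun _ _ => zero_le_one) t
  have hF20 : ∀ t, 0 ≤ F2 t := fun t => Set.indicator_nonneg (fun s _ => hF30 s) t
  have hF2le : ∀ t, F2 t ≤ F3 t := fun t =>
    Set.indicator_le_self' (fun s _ => hF30 s) t
  set φ1 : (ℕ → ℝ) → ℝ := fun y => F1 (y 0) with hφ1
  set φ2 : (ℕ → ℝ) → ℝ := fun y => F2 (y 0) with hφ2
  set φ3 : (ℕ → ℝ) → ℝ := fun y => F3 (y 0) with hφ3
  have hφ1m : Measurable φ1 := hF1m.comp hevalm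
  have hφ2m : Measurable φ2 := hF2m.comp hevalm
  have hφ3m : Measurable φ3 := hF3m.comp hevalm
  -- lintegral identification
  have hlint : ∀ F : ℝ → ℝ, Measurable F →
      ∫⁻ y, ENNReal.ofReal (F (y 0)) ∂ν = ∫⁻ t, ENNReal.ofReal (F t) ∂(marginal1 ν) := by
    intro F hFm
    rw [marginal1]
    exact (lintegral_map (f := fun t => ENNReal.ofReal (F t)) (ENNReal.measurable_ofReal.comp hFm)
      hevalm).symm
  -- integrability
  have hφ3i : Integrable φ3 ν := by
    refine ⟨hφ3m.aestronglyMeasurable, ?_⟩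
    rw [hasFiniteIntegral_iff_ofReal (Filter.Eventually.of_forall fun y => hF30 _)]
    rw [hlint F3 hF3m]
    exact hmomfin
  have hφ2i : Integrable φ2 ν := by
    refine hφ3i.mono hφ2m.aestronglyMeasurable ?_
    filter_upwards with y
    rw [Real.norm_eq_abs, Real.norm_eq_abs, abs_of_nonneg (hF20 _), abs_of_nonneg (hF30 _)]
    exact hF2le _
  have hφ1eq : φ1 = ((fun x : ℕ → ℝ => x 0) ⁻¹' (Btau τ)).indicator (fun _ => (1:ℝ)) := by
    funext y
    by_cases h : y 0 ∈ Btau τ <;>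
      simp [hφ1, hF1, Set.indicator_of_mem, Set.indicator_of_notMem, h, Set.mem_preimage]
  have hφ1i : Integrable φ1 ν := by
    rw [hφ1eq]
    exact (integrable_const (1:ℝ)).indicator (hevalm hBm)
  -- integral identifications
  have hL1 : ∫ y, φ1 y ∂ν = phiTail (marginal1 ν) τ := by
    rw [hφ1eq, integral_indicator_const (1:ℝ) (hevalm hBm), smul_eq_mul, mul_one,
      phiTail, marginal1, Measure.map_apply hevalm hBm, measureReal_def]
  have key0 : ∀ F : ℝ → ℝ, Measurable F → (∀ t, 0 ≤ F t) →
      ∫ y, F (y 0) ∂ν = (∫⁻ t, ENNReal.ofReal (F t) ∂(marginal1 ν)).toReal := by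
    intro F hFm hF0
    rw [integral_eq_lintegral_of_nonneg_ae (Filter.Eventually.of_forall fun y => hF0 _)
      (hFm.comp hevalm).aestronglyMeasurable]
    rw [hlint F hFm]
  have hL3 : ∫ y, φ3 y ∂ν = (momentP p (marginal1 ν)).toReal := key0 F3 hF3m hF30
  have hL2 : ∫ y, φ2 y ∂ν = (∫⁻ t in Btau τ, ENNReal.ofReal (|t| ^ p) ∂(marginal1 ν)).toReal := by
    rw [key0 F2 hF2m hF20]
    congr 1
    rw [← lintegral_indicator hBm]
    refine lintegral_congr fun t => ?_
    by_cases h : t ∈ Btau τ <;>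
      simp [hF2, hF3, Set.indicator_of_mem, Set.indicator_of_notMem, h]
  have hL3pos : 0 < ∫ y, φ3 y ∂ν := by
    rw [hL3]
    exact ENNReal.toReal_pos hmom0.ne' hmomfin.ne
  have hvP : vP p (marginal1 ν) (Btau τ) = (∫ y, φ2 y ∂ν) / (∫ y, φ3 y ∂ν) := by
    rw [hL2, hL3, vP, ENNReal.toReal_div]
  -- Birkhoff
  have hT := nu_measurePreserving hAMS
  have hergν := nu_ergodic hAMS herg
  have hb1 := birkhoff_ae shift_measurable hT hergν hφ1m hφ1i (fun y => hF10 _)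
  have hb2 := birkhoff_ae shift_measurable hT hergν hφ2m hφ2i (fun y => hF20 _)
  have hb3 := birkhoff_ae shift_measurable hT hergν hφ3m hφ3i (fun y => hF30 _)
  set D1 := {x | Tendsto (fun n => birkS shift φ1 n x / n) atTop (𝓝 (∫ y, φ1 y ∂ν))} with hD1
  set D2 := {x | Tendsto (fun n => birkS shift φ2 n x / n) atTop (𝓝 (∫ y, φ2 y ∂ν))} with hD2
  set D3 := {x | Tendsto (fun n => birkS shift φ3 n x / n) atTop (𝓝 (∫ y, φ3 y ∂ν))} with hD3
  set D := D1 ∩ (D2 ∩ D3) with hD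
  have hDm : MeasurableSet D :=
    ((tendstoSet_meas shift_measurable hφ1m _).inter
      ((tendstoSet_meas shift_measurable hφ2m _).inter
        (tendstoSet_meas shift_measurable hφ3m _)))
  have hDinv : shift ⁻¹' D = D := by
    rw [hD, Set.preimage_inter, Set.preimage_inter, hD1, hD2, hD3,
      tendstoSet_inv, tendstoSet_inv, tendstoSet_inv]
  have hνD : ν D = 1 := by
    have hae : ∀ᵐ x ∂ν, x ∈ D := by
      filter_upwards [hb1, hb2, hb3] with x h1 h2 h3
      exact ⟨h1, h2, h3⟩
    rw [← measure_univ (μ := ν)]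
    refine measure_congr (ae_eq_univ.mpr ?_)
    exact ae_iff.1 hae
  have hμD : μ D = 1 := by rw [invariant_measure_eq hAMS hDm hDinv, hνD]
  have hμae : ∀ᵐ x ∂μ, x ∈ D := by
    have hc : μ Dᶜ = 0 := by
      rw [measure_compl hDm (measure_ne_top μ D), hμD, measure_univ, tsub_self]
    filter_upwards [measure_eq_zero_iff_ae_notMem.mp hc] with x hx
    simpa using hx
  constructor
  · filter_upwards [hμae] with x hx
    have h1 : Tendsto (fun n => birkS shift φ1 n x / (n:ℝ)) atTop (𝓝 (∫ y, φ1 y ∂ν)) := hx.1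
    rw [hL1] at h1
    refine h1.congr fun n => ?_
    rw [hφ1, birkS_shift F1 n x]
  · filter_upwards [hμae] with x hx
    have h2 : Tendsto (fun n => birkS shift φ2 n x / (n:ℝ)) atTop (𝓝 (∫ y, φ2 y ∂ν)) := hx.2.1
    have h3 : Tendsto (fun n => birkS shift φ3 n x / (n:ℝ)) atTop (𝓝 (∫ y, φ3 y ∂ν)) := hx.2.2
    have hdiv := h2.div h3 hL3pos.ne'
    rw [← hvP] at hdiv
    refine Tendsto.congr' ?_ hdiv
    filter_upwards [eventually_ge_atTop 1] with n hn
    have hnne : ((n:ℝ)) ≠ 0 := by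
      have : (0:ℝ) < n := by exact_mod_cast hn
      exact this.ne'
    show birkS shift φ2 n x / (n:ℝ) / (birkS shift φ3 n x / (n:ℝ)) = _
    rw [div_div_div_cancel_right₀ hnne, hφ2, hφ3, birkS_shift F2 n x, birkS_shift F3 n x]

end
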